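/- Define φ_N : [0,1] → ℂ in polar form by φ_N(t) = r(t)·exp(6πiNt) for t ∈ [0,1/3], φ_N(t) = r(t) for t ∈ [1/3,2/3], and φ_N(t) = r(t)·exp(−12πiNt) for t ∈ [2/3,1], where r(t) = 9/12 + t/2 and N ≥ 1 is an integer. Then φ_N is injective and its winding number around the origin is w(φ_N) = −N. -/

import Mathlib

open Real Set

/-- Explicit lift of the argument of `φ_N` along `t ↦ exp (2πit)`. -/
noncomputable def w0aux (N : ℕ) (t : ℝ) : ℝ :=
  if t ≤ 1/3 then 3*N*t else if t ≤ 2/3 then N else -6*N*t + 5*N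

lemma w0aux_cont (N : ℕ) : Continuous (w0aux N) := by
  unfold w0aux
  apply Continuous.if_le
  · fun_prop
  · apply Continuous.if_le
    · fun_prop
    · fun_prop
    · fun_prop
    · fun_prop
    · intro x hx; rw [hx]; push_cast; ring
  · fun_prop
  · fun_prop
  · intro x hx
    rw [hx, if_pos (by norm_num : (1/3 : ℝ) ≤ 2/3)]
    push_cast; ring

/-- The arc `φ_N(t)` with radius `r(t) = 9/12 + t/2`, which winds counterclockwise `N`
times on `[0,1/3]`, stays at constant argument on `[1/3,2/3]`, and winds clockwise `2N`
times on `[2/3,1]`, is injective and has winding number `-N` around the origin. -/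
theorem phiN_injective_and_winding
    (N : ℕ) (hN : 1 ≤ N) (φ : ℝ → ℂ)
    (hφ : ∀ t : ℝ, φ t =
      if t ≤ 1/3 then ((9/12 + t/2 : ℝ) : ℂ) * Complex.exp (6 * π * N * t * Complex.I)
      else if t ≤ 2/3 then ((9/12 + t/2 : ℝ) : ℂ)
      else ((9/12 + t/2 : ℝ) : ℂ) * Complex.exp (-(12 * π * N * t) * Complex.I)) :
    InjOn φ (Icc 0 1) ∧
      ∀ ω : ℝ → ℝ, ContinuousOn ω (Icc 0 1) →
        (∀ t ∈ Icc (0:ℝ) 1,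
          Complex.exp (2 * π * Complex.I * ω t) = φ t / (‖φ t‖ : ℂ)) →
        ω 1 - ω 0 = -N := by
  have habs : ∀ t ∈ Icc (0:ℝ) 1, ‖φ t‖ = 9/12 + t/2 := by
    intro t ht
    have hr : (0:ℝ) ≤ 9/12 + t/2 := by nlinarith [ht.1]
    rw [hφ t]
    split_ifs with h1 h2
    · rw [norm_mul, Complex.norm_real, Real.norm_eq_abs, abs_of_nonneg hr]
      have he : (6 * (π:ℂ) * N * t * Complex.I) = ((6*π*N*t : ℝ):ℂ) * Complex.I := by
        push_cast; ring
      rw [he, Complex.norm_exp_ofReal_mul_I, mul_one]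
    · rw [Complex.norm_real, Real.norm_eq_abs, abs_of_nonneg hr]
    · rw [norm_mul, Complex.norm_real, Real.norm_eq_abs, abs_of_nonneg hr]
      have he : (-(12 * (π:ℂ) * N * t) * Complex.I) = ((-(12*π*N*t) : ℝ):ℂ) * Complex.I := by
        push_cast; ring
      rw [he, Complex.norm_exp_ofReal_mul_I, mul_one]
  constructor
  · intro s hs t ht hst
    have h1 := habs s hs
    have h2 := habs t ht
    rw [hst, h2] at h1
    linarith
  · intro ω hω hexp
    -- the explicit lift also satisfies the lifting property
    have hw0exp : ∀ t ∈ Icc (0:ℝ) 1,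
        Complex.exp (2 * π * Complex.I * (w0aux N t)) = φ t / (‖φ t‖ : ℂ) := by
      intro t ht
      have hr : (9/12 + t/2 : ℝ) ≠ 0 := by nlinarith [ht.1]
      have hrC : ((9/12 + t/2 : ℝ) : ℂ) ≠ 0 := by exact_mod_cast hr
      rw [habs t ht, hφ t]
      unfold w0aux
      split_ifs with h1 h2
      · rw [mul_comm ((9/12 + t/2 : ℝ):ℂ), mul_div_assoc, div_self hrC, mul_one]
        congr 1
        push_cast; ring
      · rw [div_self hrC]
        have he : (2 * (π:ℂ) * Complex.I * ((N:ℝ):ℂ)) = (N:ℤ) * (2 * π * Complex.I) := by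
          push_cast; ring
        rw [he, Complex.exp_int_mul_two_pi_mul_I]
      · rw [mul_comm ((9/12 + t/2 : ℝ):ℂ), mul_div_assoc, div_self hrC, mul_one]
        have he : (2 * (π:ℂ) * Complex.I * ((-6*N*t + 5*N : ℝ):ℂ)) =
            (-(12 * π * N * t) * Complex.I) + ((5*N : ℤ) : ℂ) * (2 * π * Complex.I) := by
          push_cast; ring
        rw [he, Complex.exp_add, Complex.exp_int_mul_two_pi_mul_I, mul_one]
    -- ω - w0aux N takes integer values
    have hint : ∀ t ∈ Icc (0:ℝ) 1, ∃ n : ℤ, ω t - w0aux N t = n := by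
      intro t ht
      have h1 := hexp t ht
      have h2 := hw0exp t ht
      have h3 : Complex.exp (2 * π * Complex.I * (ω t) - 2 * π * Complex.I * (w0aux N t)) = 1 := by
        rw [Complex.exp_sub, h1, h2, div_self]
        intro hc
        exact Complex.exp_ne_zero _ (h2.trans hc)
      rw [Complex.exp_eq_one_iff] at h3
      obtain ⟨n, hn⟩ := h3
      refine ⟨n, ?_⟩
      have hπ : (2 * (π:ℂ) * Complex.I) ≠ 0 := by
        simp [Complex.I_ne_zero, Real.pi_ne_zero]
      have : ((ω t - w0aux N t : ℝ) : ℂ) = (n : ℂ) := by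
        apply mul_left_cancel₀ hπ
        push_cast
        push_cast at hn
        linear_combination hn
      exact_mod_cast this
    -- ω - w0aux N is continuous hence constant (IVT + integrality)
    set g : ℝ → ℝ := fun t => ω t - w0aux N t with hg
    have hgc : ContinuousOn g (Icc 0 1) := hω.sub ((w0aux_cont N).continuousOn)
    obtain ⟨n0, hn0⟩ := hint 0 (by norm_num)
    obtain ⟨n1, hn1⟩ := hint 1 (by norm_num)
    have hg0 : g 0 = n0 := hn0
    have hg1 : g 1 = n1 := hn1
    have hkey : n0 = n1 := by
      by_contra hne
      rcases lt_or_gt_of_ne hne with h | h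
      · have hsub := intermediate_value_Icc (by norm_num : (0:ℝ) ≤ 1) hgc
        have hmem : ((n0:ℝ) + 1/2) ∈ Icc (g 0) (g 1) := by
          constructor
          · rw [hg0]; norm_num
          · rw [hg1]
            have : n0 + 1 ≤ n1 := h
            have : ((n0:ℝ)) + 1 ≤ n1 := by exact_mod_cast this
            linarith
        obtain ⟨t, ht, hgt⟩ := hsub hmem
        obtain ⟨m, hm⟩ := hint t ht
        have hm' : g t = m := hm
        rw [hm'] at hgt
        have : (2*m : ℝ) = 2*n0 + 1 := by linarith
        have : (2*m : ℤ) = 2*n0 + 1 := by exact_mod_cast this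
        omega
      · have hsub := intermediate_value_Icc' (by norm_num : (0:ℝ) ≤ 1) hgc
        have hmem : ((n1:ℝ) + 1/2) ∈ Icc (g 1) (g 0) := by
          constructor
          · rw [hg1]; norm_num
          · rw [hg0]
            have : n1 + 1 ≤ n0 := h
            have : ((n1:ℝ)) + 1 ≤ n0 := by exact_mod_cast this
            linarith
        obtain ⟨t, ht, hgt⟩ := hsub hmem
        obtain ⟨m, hm⟩ := hint t ht
        have hm' : g t = m := hm
        rw [hm'] at hgt
        have : (2*m : ℝ) = 2*n1 + 1 := by linarith
        have : (2*m : ℤ) = 2*n1 + 1 := by exact_mod_cast this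
        omega
    have hw00 : w0aux N 0 = 0 := by unfold w0aux; norm_num
    have hw01 : w0aux N 1 = -N := by
      unfold w0aux
      rw [if_neg (by norm_num), if_neg (by norm_num)]
      push_cast; ring
    have e0 : ω 0 - w0aux N 0 = n0 := hn0
    have e1 : ω 1 - w0aux N 1 = n1 := hn1
    rw [hw00] at e0
    rw [hw01] at e1
    have : (n0 : ℝ) = n1 := by exact_mod_cast hkey
    linarith
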